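/- Let S be a countable dense subset of the circle ℝ/Lℤ (L > 0) and p ∈ (0,1). Form the random graph G on vertex set S by independently including each pair {u,v} with d(u,v) < 1 as an edge with probability p. Then almost surely G is geometrically existentially closed: for every s ∈ S, every pair of disjoint finite sets A, B ⊂ S contained in the open unit ball around s, and every ε > 0, there exists v ∈ S \ (A ∪ B) adjacent to all vertices of A, adjacent to no vertex of B, and with d(v, s) < ε. -/

import Mathlib

open MeasureTheory ProbabilityTheory

/-- Geometric existential closure for an adjacency relation on a subset `S` of the circle. -/
def IsGEC {L : ℝ} {S : Set (AddCircle L)} (Adj : S → S → Prop) : Prop :=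
  ∀ (s : S) (A B : Finset S), Disjoint A B →
    (∀ a ∈ A, dist (a : AddCircle L) (s : AddCircle L) < 1) →
    (∀ b ∈ B, dist (b : AddCircle L) (s : AddCircle L) < 1) →
    ∀ ε : ℝ, 0 < ε →
      ∃ v : S, v ∉ A ∧ v ∉ B ∧ (∀ a ∈ A, Adj v a) ∧ (∀ b ∈ B, ¬ Adj v b) ∧
        dist (v : AddCircle L) (s : AddCircle L) < ε

open Filter Topology

lemma addCircle_nhdsNE_neBot (L : ℝ) (hL : 0 < L) (x : AddCircle L) : (𝓝[≠] x).NeBot := by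
  have hdist : ∀ n : ℕ, dist (x + (↑(L / (2 * (n + 1))) : AddCircle L)) x = L / (2 * (n + 1)) := by
    intro n
    have hpos : (0:ℝ) < L / (2 * (n + 1)) := by positivity
    rw [dist_eq_norm, add_sub_cancel_left,
      (AddCircle.norm_coe_eq_abs_iff L hL.ne').mpr ?_, abs_of_pos hpos]
    rw [abs_of_pos hpos, abs_of_pos hL]
    rw [div_le_div_iff₀ (by positivity) (by norm_num)]
    nlinarith [Nat.cast_nonneg (α := ℝ) n]
  have key : Tendsto (fun n : ℕ => x + (↑(L / (2 * (n + 1))) : AddCircle L)) atTop (𝓝[≠] x) := by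
    rw [tendsto_nhdsWithin_iff]
    constructor
    · rw [tendsto_iff_dist_tendsto_zero]
      simp only [hdist]
      have : Tendsto (fun n : ℕ => (L/2) / (n + 1)) atTop (𝓝 0) := by
        have h1 : Tendsto (fun n : ℕ => (L/2) / (n:ℝ)) atTop (𝓝 0) :=
          tendsto_const_div_atTop_nhds_zero_nat _
        have h2 := h1.comp (tendsto_add_atTop_nat 1)
        have : (fun n : ℕ => (L/2) / ((n:ℝ) + 1)) = (fun n : ℕ => (L/2)/(n:ℝ)) ∘ (fun n => n + 1) := by
          funext n; simp [Function.comp]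
        rw [this]; exact h2
      convert this using 2 with n
      field_simp
    · refine Eventually.of_forall fun n => ?_
      simp only [Set.mem_compl_iff, Set.mem_singleton_iff]
      intro h
      have h0 : (↑(L / (2 * (n + 1))) : AddCircle L) = 0 := by
        have := add_eq_left.mp h
        exact this
      have := hdist n
      rw [show x + (↑(L / (2 * (n + 1))) : AddCircle L) = x by rw [h0, add_zero],
        dist_self] at this
      have hpos : (0:ℝ) < L / (2 * (n + 1)) := by positivity
      linarith
  exact key.neBot

lemma key_lemma (L : ℝ) (hLpos : 0 < L) (S : Set (AddCircle L))
    (hSdense : Dense S)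
    (p : ℝ) (hp : p ∈ Set.Ioo (0 : ℝ) 1)
    {Ω : Type} [MeasurableSpace Ω] (μ : Measure Ω) [IsProbabilityMeasure μ]
    (E : Sym2 S → Ω → Bool) (hmeas : ∀ e, Measurable (E e))
    (hindep : iIndepFun E μ)
    (hber : ∀ u v : S, u ≠ v → dist (u : AddCircle L) (v : AddCircle L) < 1 →
      μ {ω | E s(u, v) ω = true} = ENNReal.ofReal p)
    (s : S) (A B : Finset S) (hAB : Disjoint A B)
    (hA : ∀ a ∈ A, dist (a : AddCircle L) (s : AddCircle L) < 1)
    (hB : ∀ b ∈ B, dist (b : AddCircle L) (s : AddCircle L) < 1)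
    (ε : ℝ) (hε : 0 < ε) :
    ∀ᵐ ω ∂μ, ∃ v : S, v ∉ A ∧ v ∉ B ∧
      (∀ a ∈ A, v ≠ a ∧ dist (v : AddCircle L) (a : AddCircle L) < 1 ∧ E s(v, a) ω = true) ∧
      (∀ b ∈ B, ¬ (v ≠ b ∧ dist (v : AddCircle L) (b : AddCircle L) < 1 ∧ E s(v, b) ω = true)) ∧
      dist (v : AddCircle L) (s : AddCircle L) < ε := by
  classical
  set F : Finset S := A ∪ B with hF
  -- the radius
  set M : NNReal := F.sup (fun a => nndist (a : AddCircle L) (s : AddCircle L)) with hM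
  have hM1 : (M : ℝ) < 1 := by
    rw [hM]
    have : F.sup (fun a => nndist (a : AddCircle L) (s : AddCircle L)) < 1 := by
      rw [Finset.sup_lt_iff (by norm_num : (⊥ : NNReal) < 1)]
      intro a ha
      have : dist (a : AddCircle L) (s : AddCircle L) < 1 := by
        rcases Finset.mem_union.mp ha with h | h
        · exact hA a h
        · exact hB a h
      rw [← NNReal.coe_lt_coe]
      simpa [coe_nndist] using this
    exact_mod_cast this
  have hMle : ∀ a ∈ F, dist (a : AddCircle L) (s : AddCircle L) ≤ (M : ℝ) := by
    intro a ha
    have := Finset.le_sup (f := fun a : S => nndist (a : AddCircle L) (s : AddCircle L)) ha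
    rw [← hM] at this
    rw [← coe_nndist]
    exact_mod_cast this
  set r : ℝ := min ε (1 - (M:ℝ)) with hr
  have hrpos : 0 < r := lt_min hε (by linarith)
  -- candidates
  haveI : ∀ x : AddCircle L, (𝓝[≠] x).NeBot := addCircle_nhdsNE_neBot L hLpos
  have hnext : ∀ W : Finset S, ∃ v : S, v ∉ W ∧ dist (v : AddCircle L) (s : AddCircle L) < r := by
    intro W
    have hd : Dense (S \ (W.image (fun a : S => (a : AddCircle L)) : Finset (AddCircle L))) :=
      hSdense.diff_finset _
    obtain ⟨x, hx1, hx2⟩ := hd.exists_mem_open Metric.isOpen_ball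
      ⟨(s : AddCircle L), Metric.mem_ball_self hrpos⟩
    refine ⟨⟨x, hx1.1⟩, ?_, by simpa [Metric.mem_ball] using hx2⟩
    intro hW
    exact hx1.2 (by simp only [Finset.coe_image, Set.mem_image]; exact ⟨⟨x, hx1.1⟩, hW, rfl⟩)
  choose next hnext1 hnext2 using hnext
  set aux : ℕ → Finset S := fun n => Nat.rec F (fun _ W => insert (next W) W) n with haux
  set v : ℕ → S := fun n => next (aux n) with hv
  have haux_succ : ∀ n, aux (n + 1) = insert (v n) (aux n) := fun n => rfl
  have haux_mono : ∀ m n, m ≤ n → aux m ⊆ aux n := by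
    intro m n hmn
    induction n with
    | zero => rw [Nat.le_zero.mp hmn]
    | succ k ih =>
      rcases Nat.lt_or_ge m (k+1) with h | h
      · exact (ih (Nat.lt_succ_iff.mp h)).trans (by rw [haux_succ]; exact Finset.subset_insert _ _)
      · rw [Nat.le_antisymm hmn h]
  have hvnotaux : ∀ n, v n ∉ aux n := fun n => hnext1 (aux n)
  have hvF : ∀ n, v n ∉ F := fun n => fun h => hvnotaux n (haux_mono 0 n (Nat.zero_le n) h)
  have hvinj : Function.Injective v := by
    intro k m hkm
    by_contra hne
    rcases Ne.lt_or_gt hne with h | h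
    · exact hvnotaux m (haux_mono (k+1) m h (by rw [haux_succ]; exact hkm ▸ Finset.mem_insert_self _ _))
    · exact hvnotaux k (haux_mono (m+1) k h (by rw [haux_succ]; exact hkm ▸ Finset.mem_insert_self _ _))
  have hvr : ∀ n, dist ((v n : S) : AddCircle L) (s : AddCircle L) < r := fun n => hnext2 (aux n)
  have hvε : ∀ n, dist ((v n : S) : AddCircle L) (s : AddCircle L) < ε :=
    fun n => lt_of_lt_of_le (hvr n) (min_le_left _ _)
  have hvdist : ∀ n, ∀ a ∈ F, dist ((v n : S) : AddCircle L) (a : AddCircle L) < 1 := by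
    intro n a ha
    calc dist ((v n : S) : AddCircle L) (a : AddCircle L)
        ≤ dist ((v n : S) : AddCircle L) (s : AddCircle L)
          + dist (s : AddCircle L) (a : AddCircle L) := dist_triangle _ _ _
      _ < r + (M : ℝ) := by
          have := hMle a ha
          rw [dist_comm (s : AddCircle L)]
          have h2 := hvr n
          linarith
      _ ≤ (1 - (M:ℝ)) + (M:ℝ) := by
          have : r ≤ 1 - (M:ℝ) := min_le_right _ _
          linarith
      _ = 1 := by ring
  have hvne : ∀ n, ∀ a ∈ F, v n ≠ a := fun n a ha h => hvF n (h ▸ ha)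
  -- probability setup
  set pE : ENNReal := ENNReal.ofReal p with hpE
  have hpE0 : pE ≠ 0 := by
    rw [hpE]
    simp only [ne_eq, ENNReal.ofReal_eq_zero, not_le]
    exact hp.1
  have hpE1 : pE < 1 := by rw [hpE]; exact ENNReal.ofReal_lt_one.mpr hp.2
  have hBoolMeas : ∀ t : Set Bool, MeasurableSet t := fun t => t.to_countable.measurableSet
  set c : S → Bool := fun a => if a ∈ A then true else false with hc
  set Good : ℕ → Set Ω := fun k => ⋂ a ∈ F, E s(v k, a) ⁻¹' {c a} with hGood
  set q : ENNReal := pE ^ A.card * (1 - pE) ^ B.card with hq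
  have hsingle : ∀ k, ∀ a ∈ F, μ (E s(v k, a) ⁻¹' {c a}) = if a ∈ A then pE else 1 - pE := by
    intro k a ha
    have hb := hber (v k) a (hvne k a ha) (hvdist k a ha)
    have htrue : {ω | E s(v k, a) ω = true} = E s(v k, a) ⁻¹' {true} := by
      ext ω; simp
    rw [htrue] at hb
    by_cases haA : a ∈ A
    · rw [if_pos haA, hc]
      simp only [if_pos haA]
      exact hb
    · rw [if_neg haA, hc]
      simp only [if_neg haA]
      have hfalse : E s(v k, a) ⁻¹' {false} = (E s(v k, a) ⁻¹' {true})ᶜ := by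
        ext ω; simp
      rw [hfalse, prob_compl_eq_one_sub (hmeas _ (hBoolMeas _)), hb]
  have hφinj : ∀ k, ∀ x ∈ F, ∀ y ∈ F, s(v k, x) = s(v k, y) → x = y := by
    intro k x hx y hy h
    rw [Sym2.eq_iff] at h
    rcases h with ⟨_, h2⟩ | ⟨h1, _⟩
    · exact h2
    · exact absurd h1 (hvne k y hy)
  have hμGood : ∀ k, μ (Good k) = q := by
    intro k
    set φ : S → Sym2 S := fun a => s(v k, a) with hφ
    set sets : Sym2 S → Set Bool :=
      fun e => ⋂ a ∈ F.filter (fun a => φ a = e), {c a} with hsets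
    have hsetsφ : ∀ a ∈ F, sets (φ a) = {c a} := by
      intro a ha
      have hfil : F.filter (fun b => φ b = φ a) = {a} := by
        ext b
        simp only [Finset.mem_filter, Finset.mem_singleton]
        constructor
        · rintro ⟨hb, h⟩; exact hφinj k b hb a ha h
        · rintro rfl; exact ⟨ha, rfl⟩
      have hrfl : sets (φ a) = ⋂ b ∈ F.filter (fun b => φ b = φ a), ({c b} : Set Bool) := rfl
      rw [hrfl, hfil]
      simp
    have hprod := hindep.measure_inter_preimage_eq_mul (S := F.image φ) (sets := sets)
      (fun i _ => hBoolMeas _)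
    have hL : (⋂ e ∈ F.image φ, E e ⁻¹' sets e) = Good k := by
      rw [hGood]
      ext ω
      simp only [Set.mem_iInter, Finset.mem_image, Set.mem_preimage]
      constructor
      · intro h a ha
        have := h (φ a) ⟨a, ha, rfl⟩
        rwa [hsetsφ a ha] at this
      · rintro h e ⟨a, ha, rfl⟩
        rw [hsetsφ a ha]
        exact h a ha
    have hR : ∏ e ∈ F.image φ, μ (E e ⁻¹' sets e) = ∏ a ∈ F, μ (E (φ a) ⁻¹' {c a}) := by
      rw [Finset.prod_image (hφinj k)]
      exact Finset.prod_congr rfl fun a ha => by rw [hsetsφ a ha]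
    have hGoodEq : μ (Good k) = ∏ a ∈ F, μ (E (φ a) ⁻¹' {c a}) := by
      rw [← hL, hprod, hR]
    rw [hGoodEq, hq]
    have : ∀ a ∈ F, μ (E (φ a) ⁻¹' {c a}) = if a ∈ A then pE else 1 - pE := hsingle k
    rw [Finset.prod_congr rfl this, hF, Finset.prod_union hAB]
    congr 1
    · rw [Finset.prod_congr rfl (fun a ha => if_pos ha), Finset.prod_const]
    · rw [Finset.prod_congr rfl (fun b hb => if_neg (Finset.disjoint_right.mp hAB hb)),
        Finset.prod_const]
  have hGoodMeas : ∀ k, MeasurableSet (Good k) := fun k =>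
    Finset.measurableSet_biInter _ fun a _ => hmeas _ (hBoolMeas _)
  -- disjointness of coordinate groups
  set T : ℕ → Finset (Sym2 S) := fun k => F.image (fun a => s(v k, a)) with hT
  have hTdisj : ∀ n, Disjoint (T n) ((Finset.range n).biUnion T) := by
    intro n
    rw [Finset.disjoint_left]
    rintro e he hh
    obtain ⟨a, ha, rfl⟩ := Finset.mem_image.mp he
    obtain ⟨k, hk, hek⟩ := Finset.mem_biUnion.mp hh
    obtain ⟨b, hb, hbe⟩ := Finset.mem_image.mp hek
    rw [Sym2.eq_iff] at hbe
    rcases hbe with ⟨h1, _⟩ | ⟨h1, _⟩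
    · exact absurd (hvinj h1) (Finset.mem_range.mp hk).ne
    · exact hvne k a ha h1
  have hq0 : q ≠ 0 := by
    rw [hq]
    refine mul_ne_zero (pow_ne_zero _ hpE0) (pow_ne_zero _ ?_)
    rw [ne_eq, tsub_eq_zero_iff_le]
    exact not_le.mpr hpE1
  have hq1 : 1 - q < 1 := ENNReal.sub_lt_self ENNReal.one_ne_top one_ne_zero hq0
  have hstep : ∀ n, μ (⋂ k ∈ Finset.range n, (Good k)ᶜ) = (1 - q) ^ n := by
    intro n
    induction n with
    | zero => simp
    | succ m ih =>
      have hIF := hindep.indepFun_finset (T m) ((Finset.range m).biUnion T) (hTdisj m) hmeas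
      set U : Finset (Sym2 S) := (Finset.range m).biUnion T with hU
      have hmemT : ∀ a, a ∈ F → s(v m, a) ∈ T m :=
        fun a h => Finset.mem_image.mpr ⟨a, h, rfl⟩
      have hmemU : ∀ k, k < m → ∀ a, a ∈ F → s(v k, a) ∈ U := fun k hk a h =>
        Finset.mem_biUnion.mpr ⟨k, Finset.mem_range.mpr hk, Finset.mem_image.mpr ⟨a, h, rfl⟩⟩
      set GX : Set (↥(T m) → Bool) :=
        {g | ∀ a, ∀ h : a ∈ F, g ⟨s(v m, a), hmemT a h⟩ = c a} with hGX
      set PY : Set (↥U → Bool) :=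
        {g | ∀ k, ∀ hk : k < m, ¬ ∀ a, ∀ h : a ∈ F, g ⟨s(v k, a), hmemU k hk a h⟩ = c a} with hPY
      have hGXpre : (fun ω (i : ↥(T m)) => E i ω) ⁻¹' GXᶜ = (Good m)ᶜ := by
        ext ω
        simp only [Set.mem_preimage, Set.mem_compl_iff, hGX, Set.mem_setOf_eq, hGood,
          Set.mem_iInter, Set.mem_preimage, Set.mem_singleton_iff]
      have hPYpre : (fun ω (i : ↥U) => E i ω) ⁻¹' PY = ⋂ k ∈ Finset.range m, (Good k)ᶜ := by
        ext ω
        simp only [Set.mem_preimage, hPY, Set.mem_setOf_eq, Set.mem_iInter, Set.mem_compl_iff,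
          hGood, Set.mem_preimage, Set.mem_singleton_iff, Finset.mem_range]
      have hGXmeas : MeasurableSet (GXᶜ) := (Set.to_countable _).measurableSet
      have hPYmeas : MeasurableSet PY := (Set.to_countable _).measurableSet
      have hmul := hIF.measure_inter_preimage_eq_mul (s := GXᶜ) (t := PY) hGXmeas hPYmeas
      have hcompl : μ ((Good m)ᶜ) = 1 - q := by
        rw [prob_compl_eq_one_sub (hGoodMeas m), hμGood]
      rw [Finset.range_add_one, Finset.set_biInter_insert, ← hGXpre, ← hPYpre, hmul,
        hGXpre, hPYpre, ih, hcompl, pow_succ, mul_comm]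
  have hzero : μ (⋂ k : ℕ, (Good k)ᶜ) = 0 := by
    have hle : ∀ n : ℕ, μ (⋂ k : ℕ, (Good k)ᶜ) ≤ (1 - q) ^ n := by
      intro n
      rw [← hstep n]
      refine measure_mono fun ω hω => ?_
      simp only [Set.mem_iInter, Set.mem_compl_iff] at hω ⊢
      exact fun k _ => hω k
    have h0 : μ (⋂ k : ℕ, (Good k)ᶜ) ≤ 0 :=
      ge_of_tendsto (ENNReal.tendsto_pow_atTop_nhds_zero_of_lt_one hq1)
        (Eventually.of_forall hle)
    exact le_antisymm h0 zero_le
  rw [ae_iff]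
  refine measure_mono_null (fun ω hω => ?_) hzero
  simp only [Set.mem_setOf_eq] at hω
  simp only [Set.mem_iInter, Set.mem_compl_iff]
  intro k hGoodk
  apply hω
  simp only [hGood, Set.mem_iInter, Set.mem_preimage, Set.mem_singleton_iff] at hGoodk
  refine ⟨v k, fun h => hvF k (Finset.mem_union_left _ h),
    fun h => hvF k (Finset.mem_union_right _ h), ?_, ?_, hvε k⟩
  · intro a ha
    have hmem := Finset.mem_union_left B ha
    have hca : c a = true := by simp [hc, ha]
    refine ⟨hvne k a hmem, hvdist k a hmem, ?_⟩
    rw [hGoodk a hmem, hca]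
  · rintro b hb ⟨-, -, hEt⟩
    have hmem := Finset.mem_union_right A hb
    have hcb : c b = false := by simp [hc, Finset.disjoint_right.mp hAB hb]
    have h2 := hGoodk b hmem
    rw [hEt, hcb] at h2
    exact Bool.noConfusion h2

/-- The random geometric graph on a countable dense subset `S` of `ℝ/Lℤ`, where each pair at
distance `< 1` is independently an edge with probability `p`, is almost surely g.e.c. -/
theorem stmt_5 (L : ℝ) (hLpos : 0 < L) (S : Set (AddCircle L))
    (hScount : S.Countable) (hSdense : Dense S)
    (p : ℝ) (hp : p ∈ Set.Ioo (0 : ℝ) 1)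
    {Ω : Type} [MeasurableSpace Ω] (μ : Measure Ω) [IsProbabilityMeasure μ]
    (E : Sym2 S → Ω → Bool) (hmeas : ∀ e, Measurable (E e))
    (hindep : iIndepFun E μ)
    (hber : ∀ u v : S, u ≠ v → dist (u : AddCircle L) (v : AddCircle L) < 1 →
      μ {ω | E s(u, v) ω = true} = ENNReal.ofReal p) :
    ∀ᵐ ω ∂μ, IsGEC (fun u v : S =>
      u ≠ v ∧ dist (u : AddCircle L) (v : AddCircle L) < 1 ∧ E s(u, v) ω = true) := by
  classical
  haveI : Countable S := hScount.to_subtype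
  have H : ∀ᵐ ω ∂μ, ∀ c : S × Finset S × Finset S × ℕ,
      Disjoint c.2.1 c.2.2.1 →
      (∀ a ∈ c.2.1, dist (a : AddCircle L) (c.1 : AddCircle L) < 1) →
      (∀ b ∈ c.2.2.1, dist (b : AddCircle L) (c.1 : AddCircle L) < 1) →
      ∃ v : S, v ∉ c.2.1 ∧ v ∉ c.2.2.1 ∧
        (∀ a ∈ c.2.1, v ≠ a ∧ dist (v : AddCircle L) (a : AddCircle L) < 1 ∧
          E s(v, a) ω = true) ∧
        (∀ b ∈ c.2.2.1, ¬ (v ≠ b ∧ dist (v : AddCircle L) (b : AddCircle L) < 1 ∧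
          E s(v, b) ω = true)) ∧
        dist (v : AddCircle L) (c.1 : AddCircle L) < 1 / (c.2.2.2 + 1) := by
    rw [ae_all_iff]
    rintro ⟨s, A, B, n⟩
    by_cases hd : Disjoint A B
    · by_cases hA : ∀ a ∈ A, dist (a : AddCircle L) (s : AddCircle L) < 1
      · by_cases hB : ∀ b ∈ B, dist (b : AddCircle L) (s : AddCircle L) < 1
        · filter_upwards [key_lemma L hLpos S hSdense p hp μ E hmeas hindep hber s A B hd hA hB
            (1 / (n + 1)) (by positivity)] with ω hω
          exact fun _ _ _ => hω
        · exact Filter.Eventually.of_forall fun ω _ _ hB' => absurd hB' hB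
      · exact Filter.Eventually.of_forall fun ω _ hA' => absurd hA' hA
    · exact Filter.Eventually.of_forall fun ω hd' => absurd hd' hd
  filter_upwards [H] with ω hω
  intro s A B hd hA hB ε hε
  obtain ⟨n, hn⟩ := exists_nat_one_div_lt hε
  obtain ⟨v, h1, h2, h3, h4, h5⟩ := hω (s, A, B, n) hd hA hB
  exact ⟨v, h1, h2, h3, h4, h5.trans hn⟩
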